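/- If a multivalued function F : X ⊸ Y between digital images has strong continuity and F(x) is connected for each x ∈ X, then F is connectivity preserving. -/

import Mathlib

/-- A subset `A` is connected under adjacency `adj`: any two of its points are
joined by a path of consecutively adjacent points lying in `A`. -/
def ConnIn {X : Type*} (adj : X → X → Prop) (A : Set X) : Prop :=
  ∀ a ∈ A, ∀ b ∈ A,
    Relation.ReflTransGen (fun u v => adj u v ∧ u ∈ A ∧ v ∈ A) a b

/-- Two subsets are adjacent if they contain points that are equal or adjacent. -/
def AdjSets {X : Type*} (adj : X → X → Prop) (A B : Set X) : Prop :=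
  ∃ a ∈ A, ∃ b ∈ B, a = b ∨ adj a b

/-- Image of a set under a multivalued function. -/
def imageMV {X Y : Type*} (F : X → Set Y) (A : Set X) : Set Y :=
  ⋃ x ∈ A, F x

/-- A multivalued function is connectivity preserving if images of connected
sets are connected. -/
def ConnPres {X Y : Type*} (adjX : X → X → Prop) (adjY : Y → Y → Prop)
    (F : X → Set Y) : Prop :=
  ∀ A : Set X, ConnIn adjX A → ConnIn adjY (imageMV F A)

/-- `F` has strong continuity. -/
def StrongCont {X Y : Type*} (adjX : X → X → Prop) (adjY : Y → Y → Prop)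
    (F : X → Set Y) : Prop :=
  ∀ x x', adjX x x' →
    (∀ a ∈ F x, ∃ b ∈ F x', a = b ∨ adjY a b) ∧
    (∀ b ∈ F x', ∃ a ∈ F x, b = a ∨ adjY b a)

theorem strong_cont_connected_images_implies_connectivity_preserving
    {X Y : Type*} (adjX : X → X → Prop) (adjY : Y → Y → Prop)
    (hsymX : ∀ a b, adjX a b → adjX b a) (hirrX : ∀ a, ¬ adjX a a)
    (hsymY : ∀ a b, adjY a b → adjY b a) (hirrY : ∀ a, ¬ adjY a a)
    (F : X → Set Y) (hne : ∀ x, (F x).Nonempty)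
    (hstrong : StrongCont adjX adjY F)
    (hconn : ∀ x, ConnIn adjY (F x)) :
    ConnPres adjX adjY F := by
  intro A hA a ha b hb
  simp only [imageMV, Set.mem_iUnion] at ha hb
  obtain ⟨x, hx, hax⟩ := ha
  obtain ⟨x', hx', hbx'⟩ := hb
  set S := imageMV F A with hS
  have hsub : ∀ z ∈ A, F z ⊆ S := fun z hz y hy => Set.mem_biUnion hz hy
  have inF : ∀ z ∈ A, ∀ p ∈ F z, ∀ q ∈ F z,
      Relation.ReflTransGen (fun u v => adjY u v ∧ u ∈ S ∧ v ∈ S) p q := by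
    intro z hz p hp q hq
    refine Relation.ReflTransGen.mono ?_ p q (hconn z p hp q hq)
    rintro u v ⟨h1, h2, h3⟩
    exact ⟨h1, hsub z hz h2, hsub z hz h3⟩
  have hpath := hA x hx x' hx'
  have key : ∀ c, Relation.ReflTransGen (fun u v => adjX u v ∧ u ∈ A ∧ v ∈ A) x c →
      ∀ hc : c ∈ A, ∀ p ∈ F x, ∀ q ∈ F c,
      Relation.ReflTransGen (fun u v => adjY u v ∧ u ∈ S ∧ v ∈ S) p q := by
    intro c hpath
    induction hpath with
    | refl => intro hc p hp q hq; exact inF x hx p hp q hq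
    | tail hxc hcd ih =>
        rename_i c d
        obtain ⟨hadj, hcA, hdA⟩ := hcd
        intro hdA' p hp q hq
        obtain ⟨r, hr, hrq⟩ := (hstrong c d hadj).2 q hq
        have h1 := ih hcA p hp r hr
        rcases hrq with h | h
        · exact h ▸ h1
        · exact h1.tail ⟨hsymY _ _ h, hsub c hcA hr, hsub d hdA hq⟩
  exact key x' hpath hx' a hax b hbx'
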